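/- Let the joint density of (τ, x, s) be proportional to g(τ,x,s) = τ^{(n+d)/2} ∫₀¹ λ^{d/2−1} exp(−τ(‖x‖²λ + s)/2) dλ for τ > 0, x ∈ ℝ^d, s > 0. Then the posterior mean of σ = τ^{−1/2} given (x,s) equals φ₀(w)√s, where w = ‖x‖²/s and φ₀(w) = (1/√2)·(Γ((n+d+1)/2)/Γ((n+d+2)/2))·(∫₀¹ λ^{d/2−1}(1+λw)^{−(n+d+1)/2} dλ)/(∫₀¹ λ^{d/2−1}(1+λw)^{−(n+d+2)/2} dλ). -/

import Mathlib

open MeasureTheory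

open Set Real in
private lemma intOn_rpow_Ioo {r : ℝ} (hr : -1 < r) :
    IntegrableOn (fun l : ℝ => l ^ r) (Set.Ioo 0 1) := by
  have h := intervalIntegral.intervalIntegrable_rpow' (a := (0 : ℝ)) (b := 1) hr
  rw [intervalIntegrable_iff] at h
  exact h.mono_set (by rw [Set.uIoc_of_le zero_le_one]; exact Set.Ioo_subset_Ioc_self)

open Set Real in
private lemma intOn_lam {d : ℕ} (hd : 0 < d) {w a : ℝ} (hw : 0 ≤ w) (ha : 0 ≤ a) :
    IntegrableOn (fun l : ℝ => l ^ ((d : ℝ) / 2 - 1) * (1 + l * w) ^ (-a))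
      (Set.Ioo 0 1) := by
  have hd' : (0 : ℝ) < d := by exact_mod_cast hd
  have hr : (-1 : ℝ) < (d : ℝ) / 2 - 1 := by linarith
  refine Integrable.mono (intOn_rpow_Ioo hr) ?_ ?_
  · apply Measurable.aestronglyMeasurable
    exact (measurable_id.pow measurable_const).mul
      ((measurable_const.add (measurable_id.mul_const w)).pow measurable_const)
  · filter_upwards [ae_restrict_mem measurableSet_Ioo] with l hl
    have hl0 : (0 : ℝ) < l := hl.1
    have h1 : (1 : ℝ) ≤ 1 + l * w := by nlinarith
    have h2 : (1 + l * w) ^ (-a) ≤ 1 :=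
      Real.rpow_le_one_of_one_le_of_nonpos h1 (by linarith)
    have h3 : 0 ≤ (1 + l * w) ^ (-a) := Real.rpow_nonneg (by linarith) _
    rw [Real.norm_eq_abs, Real.norm_eq_abs, abs_of_nonneg (by positivity),
      abs_of_nonneg (Real.rpow_nonneg hl0.le _)]
    nlinarith [Real.rpow_nonneg hl0.le ((d : ℝ) / 2 - 1)]

open Set Real in
private lemma key_integral {d : ℕ} (hd : 0 < d) {S s a : ℝ} (hS : 0 ≤ S) (hs : 0 < s)
    (ha : 0 < a) :
    (∫ τ in Set.Ioi (0 : ℝ), τ ^ (a - 1) *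
        ∫ l in Set.Ioo (0 : ℝ) 1,
          l ^ ((d : ℝ) / 2 - 1) * Real.exp (-τ * (S * l + s) / 2))
      = Real.Gamma a * (2 / s) ^ a *
        ∫ l in Set.Ioo (0 : ℝ) 1,
          l ^ ((d : ℝ) / 2 - 1) * (1 + l * (S / s)) ^ (-a) := by
  have hd' : (0 : ℝ) < d := by exact_mod_cast hd
  have hr : (-1 : ℝ) < (d : ℝ) / 2 - 1 := by linarith
  -- push the factor τ^(a-1) inside the inner integral
  simp_rw [← MeasureTheory.integral_const_mul]
  -- Fubini
  have hint : Integrable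
      (Function.uncurry fun (τ l : ℝ) =>
        τ ^ (a - 1) * (l ^ ((d : ℝ) / 2 - 1) * Real.exp (-τ * (S * l + s) / 2)))
      ((volume.restrict (Set.Ioi 0)).prod (volume.restrict (Set.Ioo 0 1))) := by
    have hb : (0 : ℝ) < s / 2 := by linarith
    have h1 : IntegrableOn (fun τ : ℝ => τ ^ (a - 1) * Real.exp (-(s / 2) * τ))
        (Set.Ioi 0) := by
      have := integrableOn_rpow_mul_exp_neg_mul_rpow (s := a - 1) (p := 1)
        (by linarith) zero_lt_one hb
      simpa [Real.rpow_one] using this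
    have h2 := intOn_rpow_Ioo hr
    have hprod : Integrable
        (fun z : ℝ × ℝ => (z.1 ^ (a - 1) * Real.exp (-(s / 2) * z.1)) *
          z.2 ^ ((d : ℝ) / 2 - 1))
        ((volume.restrict (Set.Ioi 0)).prod (volume.restrict (Set.Ioo 0 1))) :=
      h1.mul_prod h2
    refine hprod.mono ?_ ?_
    · apply Measurable.aestronglyMeasurable
      exact (measurable_fst.pow measurable_const).mul
        ((measurable_snd.pow measurable_const).mul
          (((measurable_fst.neg.mul
            ((measurable_snd.const_mul S).add_const s)).div_const 2).exp))
    · rw [Measure.prod_restrict]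
      filter_upwards [ae_restrict_mem (measurableSet_Ioi.prod measurableSet_Ioo)]
        with z hz
      obtain ⟨hτ, hl⟩ := hz
      have hτ0 : (0 : ℝ) < z.1 := hτ
      have hl0 : (0 : ℝ) < z.2 := hl.1
      have hexp : Real.exp (-z.1 * (S * z.2 + s) / 2) ≤ Real.exp (-(s / 2) * z.1) := by
        apply Real.exp_le_exp.2
        nlinarith [mul_nonneg (mul_nonneg hτ0.le hS) hl0.le]
      rw [Real.norm_eq_abs, Real.norm_eq_abs, Function.uncurry,
        abs_of_nonneg (by positivity), abs_of_nonneg (by positivity)]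
      have h1 : 0 ≤ z.1 ^ (a - 1) := Real.rpow_nonneg hτ0.le _
      have h2 : 0 ≤ z.2 ^ ((d : ℝ) / 2 - 1) := Real.rpow_nonneg hl0.le _
      calc z.1 ^ (a - 1) * (z.2 ^ ((d : ℝ) / 2 - 1) * Real.exp (-z.1 * (S * z.2 + s) / 2))
          ≤ z.1 ^ (a - 1) * (z.2 ^ ((d : ℝ) / 2 - 1) * Real.exp (-(s / 2) * z.1)) := by
            apply mul_le_mul_of_nonneg_left _ h1
            exact mul_le_mul_of_nonneg_left hexp h2
        _ = z.1 ^ (a - 1) * Real.exp (-(s / 2) * z.1) * z.2 ^ ((d : ℝ) / 2 - 1) := by ring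
  rw [MeasureTheory.integral_integral_swap hint]
  apply setIntegral_congr_fun measurableSet_Ioo
  intro l hl
  dsimp only
  have hl0 : (0 : ℝ) < l := hl.1
  have hc : (0 : ℝ) < (S * l + s) / 2 := by nlinarith
  have : (∫ τ in Set.Ioi (0 : ℝ),
      τ ^ (a - 1) * (l ^ ((d : ℝ) / 2 - 1) * Real.exp (-τ * (S * l + s) / 2)))
      = l ^ ((d : ℝ) / 2 - 1) *
        ∫ τ in Set.Ioi (0 : ℝ), τ ^ (a - 1) * Real.exp (-((S * l + s) / 2 * τ)) := by
    rw [← MeasureTheory.integral_const_mul]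
    apply setIntegral_congr_fun measurableSet_Ioi
    intro τ _
    dsimp only
    have h : -τ * (S * l + s) / 2 = -((S * l + s) / 2 * τ) := by ring
    rw [h]; ring
  rw [this, Real.integral_rpow_mul_exp_neg_mul_Ioi ha hc]
  have h1w : (0 : ℝ) < 1 + l * (S / s) := by
    have : 0 ≤ l * (S / s) := by positivity
    linarith
  have hbase : 1 / ((S * l + s) / 2) = (2 / s) * (1 + l * (S / s))⁻¹ := by
    have hsum : (0 : ℝ) < S * l + s := by nlinarith
    have h1 : S * l + s ≠ 0 := hsum.ne'
    have h2 : s ≠ 0 := hs.ne'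
    have h3 : 1 + l * (S / s) ≠ 0 := h1w.ne'
    field_simp
    ring
  rw [hbase, Real.mul_rpow (by positivity) (by positivity),
    Real.inv_rpow h1w.le, ← Real.rpow_neg h1w.le]
  ring

set_option maxHeartbeats 1000000 in
/-- With joint density proportional to
`g(τ,x,s) = τ^{(n+d)/2} ∫₀¹ λ^{d/2-1} exp(-τ(‖x‖²λ+s)/2) dλ`, the posterior mean of
`σ = τ^{-1/2}` given `(x,s)` equals `φ₀(w)√s` where `w = ‖x‖²/s`. -/
theorem posterior_mean_of_sigma (n d : ℕ) (hn : 0 < n) (hd : 0 < d)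
    (x : Fin d → ℝ) (s : ℝ) (hs : 0 < s)
    (w : ℝ) (hw : w = (∑ i, x i ^ 2) / s)
    (g : ℝ → ℝ)
    (hg : ∀ τ : ℝ, g τ = τ ^ (((n : ℝ) + d) / 2) *
      ∫ l in Set.Ioo (0 : ℝ) 1,
        l ^ ((d : ℝ) / 2 - 1) * Real.exp (-τ * ((∑ i, x i ^ 2) * l + s) / 2)) :
    (∫ τ in Set.Ioi (0 : ℝ), τ ^ (-(1 : ℝ) / 2) * g τ) / (∫ τ in Set.Ioi (0 : ℝ), g τ)
      = (1 / Real.sqrt 2)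
        * (Real.Gamma (((n : ℝ) + d + 1) / 2) / Real.Gamma (((n : ℝ) + d + 2) / 2))
        * ((∫ l in Set.Ioo (0 : ℝ) 1,
              l ^ ((d : ℝ) / 2 - 1) * (1 + l * w) ^ (-((n : ℝ) + d + 1) / 2))
          / (∫ l in Set.Ioo (0 : ℝ) 1,
              l ^ ((d : ℝ) / 2 - 1) * (1 + l * w) ^ (-((n : ℝ) + d + 2) / 2)))
        * Real.sqrt s := by
  set S : ℝ := ∑ i, x i ^ 2 with hSdef
  have hS : 0 ≤ S := by positivity
  have hwS : w = S / s := hw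
  have hw0 : 0 ≤ w := by rw [hwS]; positivity
  set a₁ : ℝ := ((n : ℝ) + d + 1) / 2 with ha₁def
  set a₂ : ℝ := ((n : ℝ) + d + 2) / 2 with ha₂def
  have ha₁ : 0 < a₁ := by positivity
  have ha₂ : 0 < a₂ := by positivity
  -- rewrite numerator
  have hnum : (∫ τ in Set.Ioi (0 : ℝ), τ ^ (-(1 : ℝ) / 2) * g τ)
      = Real.Gamma a₁ * (2 / s) ^ a₁ *
        ∫ l in Set.Ioo (0 : ℝ) 1,
          l ^ ((d : ℝ) / 2 - 1) * (1 + l * (S / s)) ^ (-a₁) := by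
    rw [← key_integral hd hS hs ha₁]
    apply setIntegral_congr_fun measurableSet_Ioi
    intro τ hτ
    have hτ0 : (0 : ℝ) < τ := hτ
    dsimp only
    rw [hg τ, ← mul_assoc, ← Real.rpow_add hτ0]
    congr 1
    rw [ha₁def]; ring
  have hden : (∫ τ in Set.Ioi (0 : ℝ), g τ)
      = Real.Gamma a₂ * (2 / s) ^ a₂ *
        ∫ l in Set.Ioo (0 : ℝ) 1,
          l ^ ((d : ℝ) / 2 - 1) * (1 + l * (S / s)) ^ (-a₂) := by
    rw [← key_integral hd hS hs ha₂]
    apply setIntegral_congr_fun measurableSet_Ioi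
    intro τ _
    dsimp only
    rw [hg τ]
    congr 2
    rw [ha₂def]; ring
  -- identify the λ-integrals with those in the statement
  have hJ₁ : (∫ l in Set.Ioo (0 : ℝ) 1,
        l ^ ((d : ℝ) / 2 - 1) * (1 + l * w) ^ (-((n : ℝ) + d + 1) / 2))
      = ∫ l in Set.Ioo (0 : ℝ) 1,
          l ^ ((d : ℝ) / 2 - 1) * (1 + l * (S / s)) ^ (-a₁) := by
    rw [← hwS, ha₁def, neg_div]
  have hJ₂ : (∫ l in Set.Ioo (0 : ℝ) 1,
        l ^ ((d : ℝ) / 2 - 1) * (1 + l * w) ^ (-((n : ℝ) + d + 2) / 2))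
      = ∫ l in Set.Ioo (0 : ℝ) 1,
          l ^ ((d : ℝ) / 2 - 1) * (1 + l * (S / s)) ^ (-a₂) := by
    rw [← hwS, ha₂def, neg_div]
  -- positivity of the denominator λ-integral
  have hJ₂pos : 0 < ∫ l in Set.Ioo (0 : ℝ) 1,
      l ^ ((d : ℝ) / 2 - 1) * (1 + l * (S / s)) ^ (-a₂) := by
    have hws : (0 : ℝ) ≤ S / s := by positivity
    rw [setIntegral_pos_iff_support_of_nonneg_ae]
    · refine lt_of_lt_of_le (by simp : (0 : ENNReal) < volume (Set.Ioo (0:ℝ) 1))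
        (measure_mono ?_)
      intro l hl
      refine ⟨?_, hl⟩
      have hl0 : (0 : ℝ) < l := hl.1
      have h1w : (0 : ℝ) < 1 + l * (S / s) := by nlinarith
      have := mul_pos (Real.rpow_pos_of_pos hl0 ((d : ℝ) / 2 - 1))
        (Real.rpow_pos_of_pos h1w (-a₂))
      exact ne_of_gt this
    · filter_upwards [ae_restrict_mem measurableSet_Ioo] with l hl
      have hl0 : (0 : ℝ) < l := hl.1
      have h1w : (0 : ℝ) < 1 + l * (S / s) := by nlinarith
      positivity
    · exact intOn_lam hd hws ha₂.le
  have hΓ₂ : 0 < Real.Gamma a₂ := Real.Gamma_pos_of_pos ha₂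
  have hX₁ : (0 : ℝ) < (2 / s) ^ a₁ := Real.rpow_pos_of_pos (by positivity) _
  have hX₂ : (2 / s) ^ a₂ = (2 / s) ^ a₁ * (Real.sqrt 2 / Real.sqrt s) := by
    have h2s : (0 : ℝ) < 2 / s := by positivity
    have : a₂ = a₁ + 1 / 2 := by rw [ha₁def, ha₂def]; ring
    rw [this, Real.rpow_add h2s]
    congr 1
    rw [← Real.sqrt_eq_rpow, Real.sqrt_div (by norm_num : (0:ℝ) ≤ 2)]
  rw [hnum, hden, hJ₁, hJ₂, hX₂]
  have hs2 : Real.sqrt 2 ≠ 0 := by positivity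
  have hss : Real.sqrt s ≠ 0 := by positivity
  set G₁ := Real.Gamma a₁
  set G₂ := Real.Gamma a₂
  set X := (2 / s) ^ a₁
  set J₁' := ∫ l in Set.Ioo (0 : ℝ) 1,
    l ^ ((d : ℝ) / 2 - 1) * (1 + l * (S / s)) ^ (-a₁)
  set J₂' := ∫ l in Set.Ioo (0 : ℝ) 1,
    l ^ ((d : ℝ) / 2 - 1) * (1 + l * (S / s)) ^ (-a₂)
  rw [show G₁ * X * J₁' = X * (G₁ * J₁') from by ring,
    show G₂ * (X * (Real.sqrt 2 / Real.sqrt s)) * J₂'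
      = X * (G₂ * (Real.sqrt 2 / Real.sqrt s) * J₂') from by ring,
    mul_div_mul_left _ _ (ne_of_gt hX₁)]
  field_simp [hΓ₂.ne', hJ₂pos.ne']
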